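/- The Monroe rule satisfies weak support monotonicity without population increase: if a winning Monroe committee W contains nonempty G and a voter i with A_i ∩ G = ∅ changes her ballot to A_i ∪ G, then some winning Monroe committee of the new election intersects G; if all winning committees of E contain G, then all winning committees of the new election intersect G. -/

import Mathlib

open Finset

variable {C : Type*} [Fintype C] [DecidableEq C]

/-- `π` is a valid Monroe assignment of the voters to the committee `W`:
every voter is assigned a member of `W`, and every committee member represents
between `⌊n/k⌋` and `⌈n/k⌉` voters. -/
def isMonroeAssignment {V : Type*} [Fintype V] (k : ℕ) (W : Finset C) (π : V → C) : Prop :=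
  (∀ i, π i ∈ W) ∧
  ∀ c ∈ W, Fintype.card V / k ≤ (univ.filter fun i => π i = c).card ∧
    (univ.filter fun i => π i = c).card ≤ (Fintype.card V + k - 1) / k

/-- The Monroe misrepresentation of `W`: the minimum, over valid assignments,
of the number of voters assigned a candidate they do not approve of. -/
noncomputable def monroeMisrep {V : Type*} [Fintype V] (A : V → Finset C) (k : ℕ) (W : Finset C) : ℕ :=
  sInf {m : ℕ | ∃ π : V → C, isMonroeAssignment k W π ∧
    m = (univ.filter fun i => π i ∉ A i).card}

/-- `W` is a winning committee of the Monroe rule for `(A, k)`. -/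
def isMonroeWinner {V : Type*} [Fintype V] (A : V → Finset C) (k : ℕ) (W : Finset C) : Prop :=
  W.card = k ∧ ∀ W' : Finset C, W'.card = k → monroeMisrep A k W ≤ monroeMisrep A k W'

lemma misrep_update_le {V : Type*} [Fintype V] [DecidableEq V]
    (A : V → Finset C) (k : ℕ) (i : V) (G : Finset C) (W : Finset C) :
    monroeMisrep (Function.update A i (A i ∪ G)) k W ≤ monroeMisrep A k W := by
  set A' := Function.update A i (A i ∪ G) with hA'
  by_cases hS : {m : ℕ | ∃ π : V → C, isMonroeAssignment k W π ∧
      m = (univ.filter fun j => π j ∉ A j).card}.Nonempty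
  · obtain ⟨π, hπ, hm⟩ := Nat.sInf_mem hS
    have h1 : monroeMisrep A' k W ≤ (univ.filter fun j => π j ∉ A' j).card :=
      Nat.sInf_le ⟨π, hπ, rfl⟩
    refine h1.trans ?_
    rw [monroeMisrep, hm]
    apply Finset.card_le_card
    intro j hj
    simp only [Finset.mem_filter, Finset.mem_univ, true_and] at hj ⊢
    revert hj
    intro hj
    by_cases hji : j = i
    · subst hji
      simp only [hA', Function.update_self] at hj
      simp only [Finset.mem_union] at hj
      exact fun h => hj (Or.inl h)
    · simpa only [hA', Function.update_of_ne hji] using hj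
  · have hS' : ¬ {m : ℕ | ∃ π : V → C, isMonroeAssignment k W π ∧
        m = (univ.filter fun j => π j ∉ A' j).card}.Nonempty := by
      rintro ⟨m, π, hπ, hm⟩
      exact hS ⟨_, π, hπ, rfl⟩
    rw [monroeMisrep, monroeMisrep, Set.not_nonempty_iff_eq_empty.mp hS,
      Set.not_nonempty_iff_eq_empty.mp hS']

lemma misrep_update_eq {V : Type*} [Fintype V] [DecidableEq V]
    (A : V → Finset C) (k : ℕ) (i : V) (G : Finset C) (W : Finset C)
    (hWG : W ∩ G = ∅) :
    monroeMisrep (Function.update A i (A i ∪ G)) k W = monroeMisrep A k W := by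
  set A' := Function.update A i (A i ∪ G) with hA'
  have key : ∀ π : V → C, isMonroeAssignment k W π →
      (univ.filter fun j => π j ∉ A' j) = (univ.filter fun j => π j ∉ A j) := by
    intro π hπ
    apply Finset.filter_congr
    intro j _
    by_cases hji : j = i
    · subst hji
      have hπi : π j ∉ G := by
        intro h
        have : π j ∈ W ∩ G := Finset.mem_inter.mpr ⟨hπ.1 j, h⟩
        rw [hWG] at this; exact absurd this (Finset.notMem_empty _)
      simp only [hA', Function.update_self, Finset.mem_union]
      tauto
    · rw [hA', Function.update_of_ne hji]
  unfold monroeMisrep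
  congr 1
  ext m
  constructor
  · rintro ⟨π, hπ, hm⟩; exact ⟨π, hπ, by rw [hm, key π hπ]⟩
  · rintro ⟨π, hπ, hm⟩; exact ⟨π, hπ, by rw [hm, key π hπ]⟩

lemma exists_monroe_winner {V : Type*} [Fintype V]
    (A : V → Finset C) (k : ℕ) (hkC : k ≤ Fintype.card C) :
    ∃ W : Finset C, isMonroeWinner A k W := by
  obtain ⟨t, _, ht⟩ := Finset.exists_subset_card_eq (s := (univ : Finset C)) (n := k) (by simpa using hkC)
  have hne : ((univ : Finset (Finset C)).filter (fun s => s.card = k)).Nonempty :=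
    ⟨t, by simp [ht]⟩
  obtain ⟨W, hWmem, hWmin⟩ := Finset.exists_min_image _ (monroeMisrep A k) hne
  simp only [Finset.mem_filter, Finset.mem_univ, true_and] at hWmem
  exact ⟨W, hWmem, fun W' hW' => hWmin W' (by simp [hW'])⟩

/-- The Monroe rule satisfies weak support monotonicity without population increase. -/
theorem monroe_weak_SMWOPI {V : Type*} [Fintype V] [DecidableEq V]
    (A : V → Finset C) (k : ℕ) (hk : 1 ≤ k) (hkC : k ≤ Fintype.card C)
    (G : Finset C) (hG : G.Nonempty) (hGk : G.card ≤ k)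
    (i : V) (hiG : A i ∩ G = ∅)
    (W : Finset C) (hW : isMonroeWinner A k W) (hGW : G ⊆ W) :
    (∃ W' : Finset C, isMonroeWinner (Function.update A i (A i ∪ G)) k W' ∧
        (W' ∩ G).Nonempty) ∧
    ((∀ W₀ : Finset C, isMonroeWinner A k W₀ → G ⊆ W₀) →
      ∀ W' : Finset C, isMonroeWinner (Function.update A i (A i ∪ G)) k W' →
        (W' ∩ G).Nonempty) := by
  set A' := Function.update A i (A i ∪ G) with hA'
  have hle : ∀ W'' : Finset C, monroeMisrep A' k W'' ≤ monroeMisrep A k W'' :=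
    fun W'' => misrep_update_le A k i G W''
  have main : ∀ W' : Finset C, isMonroeWinner A' k W' → (W' ∩ G = ∅) →
      isMonroeWinner A k W' := by
    intro W' hW' hW'G
    have heq : monroeMisrep A' k W' = monroeMisrep A k W' :=
      misrep_update_eq A k i G W' hW'G
    have h1 : monroeMisrep A' k W' ≤ monroeMisrep A' k W := hW'.2 W hW.1
    have h2 : monroeMisrep A k W ≤ monroeMisrep A k W' := hW.2 W' hW'.1
    have h3 : monroeMisrep A k W' = monroeMisrep A k W :=
      le_antisymm (by rw [← heq]; exact h1.trans ((hle W).trans le_rfl)) h2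
    exact ⟨hW'.1, fun W'' hW'' => h3.symm ▸ hW.2 W'' hW''⟩
  obtain ⟨Wx, hWx⟩ := exists_monroe_winner A' k hkC
  constructor
  · by_cases hWxG : (Wx ∩ G).Nonempty
    · exact ⟨Wx, hWx, hWxG⟩
    · have hWxG' : Wx ∩ G = ∅ := Finset.not_nonempty_iff_eq_empty.mp hWxG
      have hWA : isMonroeWinner A k Wx := main Wx hWx hWxG'
      have heq : monroeMisrep A' k Wx = monroeMisrep A k Wx :=
        misrep_update_eq A k i G Wx hWxG'
      have : isMonroeWinner A' k W := by
        refine ⟨hW.1, fun W'' hW'' => ?_⟩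
        calc monroeMisrep A' k W ≤ monroeMisrep A k W := hle W
          _ ≤ monroeMisrep A k Wx := hW.2 Wx hWA.1
          _ = monroeMisrep A' k Wx := heq.symm
          _ ≤ monroeMisrep A' k W'' := hWx.2 W'' hW''
      refine ⟨W, this, ?_⟩
      obtain ⟨g, hg⟩ := hG
      exact ⟨g, Finset.mem_inter.mpr ⟨hGW hg, hg⟩⟩
  · intro hall W' hW'
    by_contra hcon
    have hW'G : W' ∩ G = ∅ :=
      Finset.not_nonempty_iff_eq_empty.mp hcon
    have hWA : isMonroeWinner A k W' := main W' hW' hW'G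
    obtain ⟨g, hg⟩ := hG
    have : g ∈ W' ∩ G := Finset.mem_inter.mpr ⟨hall W' hWA hg, hg⟩
    rw [hW'G] at this
    exact absurd this (Finset.notMem_empty _)
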